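/- Let α > 1/2. The function F is differentiable on ℝ and F′(λ) = i H(λ) for every λ ∈ ℝ. -/

import Mathlib

open MeasureTheory Filter

/-- The partial integral
`∫_{-R}^{R} sgn ξ · e^{-i·sgn ξ·π/4} |ξ|^{-1/2} e^{i(λξ + ξ|ξ|^α)} dξ` defining `F(λ)`. -/
noncomputable def Fpartial (α l R : ℝ) : ℂ :=
  ∫ ξ in (-R)..R,
    (Real.sign ξ : ℂ) *
      Complex.exp (-Complex.I * (Real.sign ξ : ℂ) * ((Real.pi / 4 : ℝ) : ℂ)) *
      ((|ξ| ^ (-(2⁻¹) : ℝ) : ℝ) : ℂ) *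
      Complex.exp (Complex.I * ((l * ξ + ξ * |ξ| ^ α : ℝ) : ℂ))

/-- The partial integral
`∫_{-R}^{R} e^{-i·sgn ξ·π/4} |ξ|^{1/2} e^{i(λξ + ξ|ξ|^α)} dξ` defining `H(λ)`. -/
noncomputable def Hpartial (α l R : ℝ) : ℂ :=
  ∫ ξ in (-R)..R,
    Complex.exp (-Complex.I * (Real.sign ξ : ℂ) * ((Real.pi / 4 : ℝ) : ℂ)) *
      ((|ξ| ^ (2⁻¹ : ℝ) : ℝ) : ℂ) *
      Complex.exp (Complex.I * ((l * ξ + ξ * |ξ| ^ α : ℝ) : ℂ))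

/-! Auxiliary definitions -/

noncomputable def Fint (α l ξ : ℝ) : ℂ :=
  (Real.sign ξ : ℂ) *
    Complex.exp (-Complex.I * (Real.sign ξ : ℂ) * ((Real.pi / 4 : ℝ) : ℂ)) *
    ((|ξ| ^ (-(2⁻¹) : ℝ) : ℝ) : ℂ) *
    Complex.exp (Complex.I * ((l * ξ + ξ * |ξ| ^ α : ℝ) : ℂ))

noncomputable def Hint (α l ξ : ℝ) : ℂ :=
  Complex.exp (-Complex.I * (Real.sign ξ : ℂ) * ((Real.pi / 4 : ℝ) : ℂ)) *
    ((|ξ| ^ (2⁻¹ : ℝ) : ℝ) : ℂ) *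
    Complex.exp (Complex.I * ((l * ξ + ξ * |ξ| ^ α : ℝ) : ℂ))

lemma Fpartial_eq (α l R : ℝ) : Fpartial α l R = ∫ ξ in (-R)..R, Fint α l ξ := rfl
lemma Hpartial_eq (α l R : ℝ) : Hpartial α l R = ∫ ξ in (-R)..R, Hint α l ξ := rfl

lemma norm_exp_re_zero {z : ℂ} (h : z.re = 0) : ‖Complex.exp z‖ = 1 := by
  rw [Complex.norm_exp, h, Real.exp_zero]

lemma re_aux (s r : ℝ) : (-Complex.I * (s : ℂ) * (r : ℂ)).re = 0 := by
  simp [Complex.mul_re]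

lemma re_aux2 (r : ℝ) : (Complex.I * (r : ℂ)).re = 0 := by
  simp

lemma abs_sign_le (ξ : ℝ) : |Real.sign ξ| ≤ 1 := by
  rcases Real.sign_apply_eq ξ with h | h | h <;> rw [h] <;> norm_num

lemma measurable_sign' : Measurable Real.sign := by
  have : Real.sign = fun r : ℝ => if r < 0 then (-1 : ℝ) else if 0 < r then 1 else 0 := rfl
  rw [this]
  exact Measurable.ite measurableSet_Iio measurable_const
    (Measurable.ite measurableSet_Ioi measurable_const measurable_const)

lemma continuous_abs_rpow (r : ℝ) (hr : 0 ≤ r) :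
    Continuous (fun x : ℝ => |x| ^ r) :=
  (Real.continuous_rpow_const hr).comp continuous_abs

lemma measurable_abs_rpow (r : ℝ) : Measurable (fun x : ℝ => |x| ^ r) := by
  rcases le_or_gt 0 r with hr | hr
  · exact (continuous_abs_rpow r hr).measurable
  · have : (fun x : ℝ => |x| ^ r) = fun x : ℝ => ((|x| ^ (-r)) ⁻¹) := by
      funext x
      rw [← Real.rpow_neg (abs_nonneg x), neg_neg]
    rw [this]
    exact (continuous_abs_rpow (-r) (by linarith)).measurable.inv

lemma measurable_phase (α l : ℝ) : Measurable fun ξ : ℝ => l * ξ + ξ * |ξ| ^ α :=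
  (measurable_const.mul measurable_id).add (measurable_id.mul (measurable_abs_rpow α))

lemma measurable_Fint (α l : ℝ) : Measurable (Fint α l) := by
  refine Measurable.mul (Measurable.mul (Measurable.mul ?_ ?_) ?_) ?_
  · exact Complex.measurable_ofReal.comp measurable_sign'
  · exact Complex.continuous_exp.measurable.comp
      ((measurable_const.mul (Complex.measurable_ofReal.comp measurable_sign')).mul
        measurable_const)
  · exact Complex.measurable_ofReal.comp (measurable_abs_rpow _)
  · exact Complex.continuous_exp.measurable.comp
      (measurable_const.mul (Complex.measurable_ofReal.comp (measurable_phase α l)))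

lemma measurable_Hint (α l : ℝ) : Measurable (Hint α l) := by
  refine Measurable.mul (Measurable.mul ?_ ?_) ?_
  · exact Complex.continuous_exp.measurable.comp
      ((measurable_const.mul (Complex.measurable_ofReal.comp measurable_sign')).mul
        measurable_const)
  · exact Complex.measurable_ofReal.comp (measurable_abs_rpow _)
  · exact Complex.continuous_exp.measurable.comp
      (measurable_const.mul (Complex.measurable_ofReal.comp (measurable_phase α l)))

lemma norm_Fint_le (α l ξ : ℝ) : ‖Fint α l ξ‖ ≤ |ξ| ^ (-(2⁻¹) : ℝ) := by
  unfold Fint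
  rw [norm_mul, norm_mul, norm_mul, norm_exp_re_zero (re_aux _ _),
    norm_exp_re_zero (re_aux2 _)]
  have h1 : ‖((Real.sign ξ : ℝ) : ℂ)‖ ≤ 1 := by
    rw [Complex.norm_real]; exact abs_sign_le ξ
  have h2 : ‖((|ξ| ^ (-(2⁻¹) : ℝ) : ℝ) : ℂ)‖ = |ξ| ^ (-(2⁻¹) : ℝ) := by
    rw [Complex.norm_real, Real.norm_eq_abs, abs_of_nonneg (Real.rpow_nonneg (abs_nonneg ξ) _)]
  calc ‖((Real.sign ξ : ℝ) : ℂ)‖ * 1 * ‖((|ξ| ^ (-(2⁻¹) : ℝ) : ℝ) : ℂ)‖ * 1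
      ≤ 1 * 1 * (|ξ| ^ (-(2⁻¹) : ℝ)) * 1 := by
        rw [h2]; gcongr
    _ = |ξ| ^ (-(2⁻¹) : ℝ) := by ring

lemma norm_Hint_eq (α l ξ : ℝ) : ‖Hint α l ξ‖ = |ξ| ^ ((2⁻¹) : ℝ) := by
  unfold Hint
  rw [norm_mul, norm_mul, norm_exp_re_zero (re_aux _ _), norm_exp_re_zero (re_aux2 _),
    Complex.norm_real, Real.norm_eq_abs, abs_of_nonneg (Real.rpow_nonneg (abs_nonneg ξ) _)]
  ring

lemma intervalIntegrable_abs_rpow {r : ℝ} (hr : -1 < r) (a b : ℝ) :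
    IntervalIntegrable (fun x : ℝ => |x| ^ r) volume a b := by
  have h0 : ∀ T : ℝ, IntervalIntegrable (fun x : ℝ => |x| ^ r) volume 0 T := by
    intro T
    rcases le_or_gt 0 T with hT | hT
    · have h := intervalIntegral.intervalIntegrable_rpow' (a := 0) (b := T) hr
      rw [intervalIntegrable_iff] at h ⊢
      refine h.congr ?_
      filter_upwards [ae_restrict_mem measurableSet_uIoc] with x hx
      rw [Set.uIoc_of_le hT] at hx
      rw [abs_of_pos hx.1]
    · have h := intervalIntegral.intervalIntegrable_rpow' (a := 0) (b := -T) hr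
      have h2 := (IntervalIntegrable.iff_comp_neg).mp h
      rw [neg_zero, neg_neg] at h2
      rw [intervalIntegrable_iff] at h2 ⊢
      refine h2.congr ?_
      filter_upwards [ae_restrict_mem measurableSet_uIoc] with x hx
      rw [Set.uIoc_of_ge hT.le] at hx
      rw [abs_of_nonpos hx.2]
  exact (h0 a).symm.trans (h0 b)

lemma intervalIntegrable_Fint (α l a b : ℝ) :
    IntervalIntegrable (Fint α l) volume a b := by
  refine IntervalIntegrable.mono_fun (intervalIntegrable_abs_rpow (r := -(2⁻¹)) (by norm_num) a b)
    ((measurable_Fint α l).aestronglyMeasurable) ?_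
  refine Filter.Eventually.of_forall fun x => ?_
  show ‖Fint α l x‖ ≤ ‖|x| ^ (-(2⁻¹) : ℝ)‖
  rw [Real.norm_eq_abs, abs_of_nonneg (Real.rpow_nonneg (abs_nonneg x) _)]
  exact norm_Fint_le α l x

lemma intervalIntegrable_Hint (α l a b : ℝ) :
    IntervalIntegrable (Hint α l) volume a b := by
  refine IntervalIntegrable.mono_fun (intervalIntegrable_abs_rpow (r := (2⁻¹)) (by norm_num) a b)
    ((measurable_Hint α l).aestronglyMeasurable) ?_
  refine Filter.Eventually.of_forall fun x => ?_
  show ‖Hint α l x‖ ≤ ‖|x| ^ ((2⁻¹) : ℝ)‖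
  rw [Real.norm_eq_abs, abs_of_nonneg (Real.rpow_nonneg (abs_nonneg x) _), norm_Hint_eq]

open Topology

noncomputable def KPp (α l x : ℝ) : ℝ := l + (1 + α) * x ^ α
noncomputable def KPq (α x : ℝ) : ℝ := (1 + α) * (α * x ^ (α - 1))
noncomputable def KPw (α β s l x : ℝ) : ℝ := x ^ β / (s * KPp α l x)
noncomputable def KPw' (α β s l x : ℝ) : ℝ :=
  (β * x ^ (β - 1) * (s * KPp α l x) - x ^ β * (s * KPq α x)) / (s * KPp α l x) ^ 2
noncomputable def KPv (α s l : ℝ) (x : ℝ) : ℂ :=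
  Complex.exp ((s : ℂ) * Complex.I * ((l * x + x * x ^ α : ℝ) : ℂ))

lemma norm_exp_re_zero' {z : ℂ} (h : z.re = 0) : ‖Complex.exp z‖ = 1 := by
  rw [Complex.norm_exp, h, Real.exp_zero]

lemma KPnorm_v (α s l x : ℝ) : ‖KPv α s l x‖ = 1 := by
  apply norm_exp_re_zero'
  simp [Complex.mul_re]

lemma KPp_deriv {α l x : ℝ} (hx : 0 < x) : HasDerivAt (KPp α l) (KPq α x) x := by
  have h := (Real.hasDerivAt_rpow_const (p := α) (Or.inl hx.ne')).const_mul (1 + α)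
  show HasDerivAt (fun y => l + (1 + α) * y ^ α) ((1 + α) * (α * x ^ (α - 1))) x
  exact h.const_add l

lemma KPphase_deriv {α l x : ℝ} (hx : 0 < x) :
    HasDerivAt (fun y : ℝ => l * y + y * y ^ α) (KPp α l x) x := by
  have h1 : HasDerivAt (fun y : ℝ => l * y) l x := by
    simpa using (hasDerivAt_id x).const_mul l
  have h2 := (hasDerivAt_id x).mul (Real.hasDerivAt_rpow_const (p := α) (Or.inl hx.ne'))
  have h3 := h1.add h2
  refine h3.congr_deriv ?_
  have hxx : x * (α * x ^ (α - 1)) = α * x ^ α := by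
    rw [mul_comm x, mul_assoc]
    congr 1
    rw [← Real.rpow_add_one hx.ne' (α - 1)]
    norm_num
  simp only [KPp, id_eq, one_mul]
  rw [hxx]; ring

lemma KPv_deriv {α s l x : ℝ} (hx : 0 < x) :
    HasDerivAt (KPv α s l)
      (KPv α s l x * ((s : ℂ) * Complex.I * ((KPp α l x : ℝ) : ℂ))) x := by
  have h := (((KPphase_deriv hx (α := α) (l := l)).ofReal_comp).const_mul
    ((s : ℂ) * Complex.I)).cexp
  exact h

lemma KPw_deriv {α β s l x : ℝ} (hx : 0 < x) (hne : s * KPp α l x ≠ 0) :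
    HasDerivAt (KPw α β s l) (KPw' α β s l x) x := by
  have h1 : HasDerivAt (fun y : ℝ => y ^ β) (β * x ^ (β - 1)) x :=
    Real.hasDerivAt_rpow_const (Or.inl hx.ne')
  have h2 : HasDerivAt (fun y : ℝ => s * KPp α l y) (s * KPq α x) x :=
    (KPp_deriv hx).const_mul s
  exact h1.div h2 hne

lemma KPw_bound {α β s l x : ℝ} (hx : 0 < x) (hs : |s| = 1)
    (hP2 : x ^ α / 2 ≤ KPp α l x) (hP : 0 < KPp α l x) :
    |KPw α β s l x| ≤ 2 * x ^ (β - α) := by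
  have htpos : 0 < x ^ α / 2 := by
    have := Real.rpow_pos_of_pos hx α; linarith
  have hb : 0 ≤ x ^ β := Real.rpow_nonneg hx.le β
  have h1 : |KPw α β s l x| = x ^ β / KPp α l x := by
    rw [KPw, abs_div, abs_mul, hs, one_mul, abs_of_pos hP, abs_of_nonneg hb]
  rw [h1]
  calc x ^ β / KPp α l x ≤ x ^ β / (x ^ α / 2) := by gcongr
    _ = 2 * x ^ (β - α) := by rw [Real.rpow_sub hx β α]; ring

lemma KPw'_bound {α β s l x : ℝ} (hx : 0 < x) (hα0 : 0 < α) (hs : |s| = 1)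
    (hP2 : x ^ α / 2 ≤ KPp α l x) (hP : 0 < KPp α l x) :
    |KPw' α β s l x| ≤ (2 * |β| + 4 * ((1 + α) * α)) * x ^ (β - 1 - α) := by
  have htpos : 0 < x ^ α / 2 := by
    have := Real.rpow_pos_of_pos hx α; linarith
  have hb1 : 0 ≤ x ^ (β - 1) := Real.rpow_nonneg hx.le _
  have hb : 0 ≤ x ^ β := Real.rpow_nonneg hx.le _
  have hQ : 0 ≤ KPq α x :=
    mul_nonneg (by linarith) (mul_nonneg hα0.le (Real.rpow_nonneg hx.le _))
  have hs2 : s ^ 2 = 1 := by rw [← sq_abs, hs, one_pow]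
  have e1 : |β * x ^ (β - 1) * (s * KPp α l x)| = |β| * x ^ (β - 1) * KPp α l x := by
    rw [abs_mul, abs_mul, abs_mul, hs, one_mul, abs_of_nonneg hb1, abs_of_pos hP]
  have e2 : |x ^ β * (s * KPq α x)| = x ^ β * KPq α x := by
    rw [abs_mul, abs_mul, hs, one_mul, abs_of_nonneg hb, abs_of_nonneg hQ]
  have hnum : |β * x ^ (β - 1) * (s * KPp α l x) - x ^ β * (s * KPq α x)|
      ≤ |β| * x ^ (β - 1) * KPp α l x + x ^ β * KPq α x := by
    calc |β * x ^ (β - 1) * (s * KPp α l x) - x ^ β * (s * KPq α x)|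
        ≤ |β * x ^ (β - 1) * (s * KPp α l x)| + |x ^ β * (s * KPq α x)| := abs_sub _ _
      _ = _ := by rw [e1, e2]
  have hden : (s * KPp α l x) ^ 2 = KPp α l x ^ 2 := by
    rw [mul_pow, hs2, one_mul]
  have hw'e : |KPw' α β s l x|
      = |β * x ^ (β - 1) * (s * KPp α l x) - x ^ β * (s * KPq α x)| / KPp α l x ^ 2 := by
    rw [KPw', abs_div, abs_of_nonneg (sq_nonneg (s * KPp α l x)), hden]
  rw [hw'e]
  have hPsq : 0 < KPp α l x ^ 2 := by positivity
  have step1 : |β * x ^ (β - 1) * (s * KPp α l x) - x ^ β * (s * KPq α x)| / KPp α l x ^ 2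
      ≤ (|β| * x ^ (β - 1) * KPp α l x + x ^ β * KPq α x) / KPp α l x ^ 2 := by gcongr
  have split : (|β| * x ^ (β - 1) * KPp α l x + x ^ β * KPq α x) / KPp α l x ^ 2
      = |β| * x ^ (β - 1) / KPp α l x + x ^ β * KPq α x / KPp α l x ^ 2 := by
    field_simp
  have t1 : |β| * x ^ (β - 1) / KPp α l x ≤ 2 * |β| * x ^ (β - 1 - α) := by
    calc |β| * x ^ (β - 1) / KPp α l x ≤ |β| * x ^ (β - 1) / (x ^ α / 2) := by
          gcongr
      _ = 2 * |β| * x ^ (β - 1 - α) := by rw [Real.rpow_sub hx (β - 1) α]; ring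
  have t2 : x ^ β * KPq α x / KPp α l x ^ 2
      ≤ 4 * ((1 + α) * α) * x ^ (β - 1 - α) := by
    have hPP : (x ^ α / 2) ^ 2 ≤ KPp α l x ^ 2 := by nlinarith
    calc x ^ β * KPq α x / KPp α l x ^ 2 ≤ x ^ β * KPq α x / ((x ^ α / 2) ^ 2) := by
          gcongr
      _ = 4 * ((1 + α) * α) * (x ^ (β + (α - 1)) / x ^ (α + α)) := by
          unfold KPq
          rw [Real.rpow_add hx β (α - 1), Real.rpow_add hx α α]
          field_simp
          ring
      _ = 4 * ((1 + α) * α) * x ^ (β - 1 - α) := by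
          rw [← Real.rpow_sub hx (β + (α - 1)) (α + α),
            show β + (α - 1) - (α + α) = β - 1 - α by ring]
  calc |β * x ^ (β - 1) * (s * KPp α l x) - x ^ β * (s * KPq α x)| / KPp α l x ^ 2
      ≤ (|β| * x ^ (β - 1) * KPp α l x + x ^ β * KPq α x) / KPp α l x ^ 2 := step1
    _ = |β| * x ^ (β - 1) / KPp α l x + x ^ β * KPq α x / KPp α l x ^ 2 := split
    _ ≤ 2 * |β| * x ^ (β - 1 - α) + 4 * ((1 + α) * α) * x ^ (β - 1 - α) := add_le_add t1 t2
    _ = (2 * |β| + 4 * ((1 + α) * α)) * x ^ (β - 1 - α) := by ring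

noncomputable def osc (α β s l b c : ℝ) : ℂ :=
  ∫ ξ in b..c, ((ξ ^ β : ℝ) : ℂ) *
    Complex.exp ((s : ℂ) * Complex.I * ((l * ξ + ξ * ξ ^ α : ℝ) : ℂ))

lemma osc_tail (α : ℝ) (hα : 1 / 2 < α) (β : ℝ) (hβ : |β| ≤ 2⁻¹) (s : ℝ)
    (hs : s = 1 ∨ s = -1) (M : ℝ) (hM : 0 ≤ M) :
    ∃ C, 0 < C ∧ ∃ a : ℝ, 1 ≤ a ∧ ∀ l b c : ℝ, |l| ≤ M → a ≤ b → b ≤ c →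
      ‖osc α β s l b c‖ ≤ C * b ^ (β - α) := by
  have hβ' := abs_le.mp hβ
  have hβ1 : β ≤ 2⁻¹ := hβ'.2
  have hαpos : 0 < α := by linarith
  have hαβ : 0 < α - β := by linarith
  set K : ℝ := 2 * |β| + 4 * ((1 + α) * α) with hK
  have hKpos : 0 ≤ K := by positivity
  have hCpos : 0 < 4 + K / (α - β) := by positivity
  refine ⟨4 + K / (α - β), hCpos, max 1 ((2 * M + 2) ^ (α⁻¹ : ℝ)), le_max_left _ _, ?_⟩
  intro l b c hl hab hbc
  have hb1 : (1 : ℝ) ≤ b := le_trans (le_max_left _ _) hab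
  have hbpos : (0 : ℝ) < b := by linarith
  have habs_s : |s| = 1 := by rcases hs with rfl | rfl <;> norm_num
  have hsne : s ≠ 0 := by rcases hs with rfl | rfl <;> norm_num
  have hkey : ∀ x : ℝ, b ≤ x → 2 * M + 2 ≤ x ^ α := by
    intro x hx
    have h1 : (2 * M + 2) ^ (α⁻¹ : ℝ) ≤ x := le_trans (le_trans (le_max_right _ _) hab) hx
    have h2 : ((2 * M + 2) ^ (α⁻¹ : ℝ)) ^ α ≤ x ^ α :=
      Real.rpow_le_rpow (Real.rpow_nonneg (by linarith) _) h1 hαpos.le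
    rwa [Real.rpow_inv_rpow (by linarith) hαpos.ne'] at h2
  have hP : ∀ x : ℝ, b ≤ x → x ^ α / 2 ≤ KPp α l x ∧ 0 < KPp α l x := by
    intro x hx
    have h1 := hkey x hx
    have h2 : 0 ≤ x ^ α := by linarith
    have h3 : x ^ α ≤ (1 + α) * x ^ α := by nlinarith
    have hl' := abs_le.mp hl
    unfold KPp
    constructor
    · nlinarith
    · nlinarith
  have hspne : ∀ x : ℝ, b ≤ x → s * KPp α l x ≠ 0 := fun x hx =>
    mul_ne_zero hsne (hP x hx).2.ne'
  have huIcc : Set.uIcc b c = Set.Icc b c := Set.uIcc_of_le hbc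
  have hmem : ∀ x ∈ Set.uIcc b c, b ≤ x ∧ 0 < x := by
    intro x hx; rw [huIcc] at hx
    exact ⟨hx.1, lt_of_lt_of_le hbpos hx.1⟩
  -- the integrand functions
  set u : ℝ → ℂ := fun x => -Complex.I * ((KPw α β s l x : ℝ) : ℂ) with hu
  set u' : ℝ → ℂ := fun x => -Complex.I * ((KPw' α β s l x : ℝ) : ℂ) with hu'
  set v' : ℝ → ℂ :=
    fun x => KPv α s l x * ((s : ℂ) * Complex.I * ((KPp α l x : ℝ) : ℂ)) with hv'
  -- derivatives
  have hu_deriv : ∀ x ∈ Set.uIcc b c, HasDerivAt u (u' x) x := by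
    intro x hx
    obtain ⟨hbx, hx0⟩ := hmem x hx
    exact ((KPw_deriv hx0 (hspne x hbx)).ofReal_comp).const_mul (-Complex.I)
  have hv_deriv : ∀ x ∈ Set.uIcc b c, HasDerivAt (KPv α s l) (v' x) x := fun x hx =>
    KPv_deriv (hmem x hx).2
  -- continuity facts for integrability
  have hcont_rpow : ∀ (r : ℝ) (x : ℝ), 0 < x → ContinuousAt (fun y : ℝ => y ^ r) x :=
    fun r x hx => Real.continuousAt_rpow_const x r (Or.inl hx.ne')
  have hcont_p : ∀ x : ℝ, 0 < x → ContinuousAt (KPp α l) x := by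
    intro x hx
    exact continuousAt_const.add (continuousAt_const.mul (hcont_rpow α x hx))
  have hcont_q : ∀ x : ℝ, 0 < x → ContinuousAt (KPq α) x := by
    intro x hx
    exact continuousAt_const.mul (continuousAt_const.mul (hcont_rpow (α - 1) x hx))
  have hint_u' : IntervalIntegrable u' volume b c := by
    apply ContinuousOn.intervalIntegrable
    intro x hx
    obtain ⟨hbx, hx0⟩ := hmem x hx
    have hw' : ContinuousAt (KPw' α β s l) x := by
      apply ContinuousAt.div
      · exact ((continuousAt_const.mul (hcont_rpow (β - 1) x hx0)).mul
          (continuousAt_const.mul (hcont_p x hx0))).sub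
          ((hcont_rpow β x hx0).mul (continuousAt_const.mul (hcont_q x hx0)))
      · exact (continuousAt_const.mul (hcont_p x hx0)).pow 2
      · exact pow_ne_zero 2 (hspne x hbx)
    exact (continuousAt_const.mul
      (Complex.continuous_ofReal.continuousAt.comp hw')).continuousWithinAt
  have hint_v' : IntervalIntegrable v' volume b c := by
    apply ContinuousOn.intervalIntegrable
    intro x hx
    obtain ⟨hbx, hx0⟩ := hmem x hx
    have hφc : ContinuousAt (fun y : ℝ => l * y + y * y ^ α) x :=
      (continuousAt_const.mul continuousAt_id).add
        (continuousAt_id.mul (hcont_rpow α x hx0))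
    have hvx : ContinuousAt (KPv α s l) x :=
      Complex.continuous_exp.continuousAt.comp
        (continuousAt_const.mul (Complex.continuous_ofReal.continuousAt.comp hφc))
    exact (hvx.mul (continuousAt_const.mul
      (Complex.continuous_ofReal.continuousAt.comp (hcont_p x hx0)))).continuousWithinAt
  -- integration by parts
  have hibp := intervalIntegral.integral_mul_deriv_eq_deriv_mul
    hu_deriv hv_deriv hint_u' hint_v'
  -- the oscillatory integral is ∫ u * v'
  have heq : osc α β s l b c = ∫ x in b..c, u x * v' x := by
    unfold osc
    refine intervalIntegral.integral_congr fun x hx => ?_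
    obtain ⟨hbx, hx0⟩ := hmem x hx
    have hwmul : KPw α β s l x * (s * KPp α l x) = x ^ β :=
      div_mul_cancel₀ _ (hspne x hbx)
    show ((x ^ β : ℝ) : ℂ) * KPv α s l x = u x * v' x
    rw [hu, hv']
    have expand : -Complex.I * ((KPw α β s l x : ℝ) : ℂ) *
        (KPv α s l x * ((s : ℂ) * Complex.I * ((KPp α l x : ℝ) : ℂ)))
        = ((KPw α β s l x * (s * KPp α l x) : ℝ) : ℂ) * KPv α s l x *
          (-Complex.I * Complex.I) := by
      push_cast
      ring
    rw [expand, hwmul]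
    simp [Complex.I_mul_I]
  -- norms of boundary terms
  have hnorm_u : ∀ x : ℝ, b ≤ x → ‖u x‖ ≤ 2 * b ^ (β - α) := by
    intro x hx
    have hx0 : 0 < x := lt_of_lt_of_le hbpos hx
    have h1 : ‖u x‖ = |KPw α β s l x| := by
      rw [hu]
      rw [norm_mul, norm_neg, Complex.norm_I, one_mul, Complex.norm_real, Real.norm_eq_abs]
    rw [h1]
    calc |KPw α β s l x| ≤ 2 * x ^ (β - α) :=
          KPw_bound hx0 habs_s (hP x hx).1 (hP x hx).2
      _ ≤ 2 * b ^ (β - α) := by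
          have := Real.rpow_le_rpow_of_nonpos hbpos hx (by linarith : β - α ≤ 0)
          linarith
  -- bound for the integral of u' * v
  have hbound_int : ‖∫ x in b..c, u' x * KPv α s l x‖ ≤ K * (b ^ (β - α) / (α - β)) := by
    have hnot : (0 : ℝ) ∉ Set.uIcc b c := by
      rw [huIcc]
      intro h0
      exact absurd h0.1 (by linarith)
    have hKint : IntervalIntegrable (fun x : ℝ => K * x ^ (β - 1 - α)) volume b c :=
      (intervalIntegral.intervalIntegrable_rpow (Or.inr hnot)).const_mul K
    have hle : ‖∫ x in b..c, u' x * KPv α s l x‖ ≤ |∫ x in b..c, K * x ^ (β - 1 - α)| := by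
      apply intervalIntegral.norm_integral_le_abs_of_norm_le _ hKint
      filter_upwards [ae_restrict_mem measurableSet_uIoc] with x hx
      have hx' : x ∈ Set.uIcc b c := Set.uIoc_subset_uIcc hx
      obtain ⟨hbx, hx0⟩ := hmem x hx'
      rw [norm_mul, KPnorm_v, mul_one, hu', norm_mul, norm_neg, Complex.norm_I, one_mul,
        Complex.norm_real, Real.norm_eq_abs]
      exact KPw'_bound hx0 hαpos habs_s (hP x hbx).1 (hP x hbx).2
    have hr_ne : β - 1 - α ≠ -1 := by
      intro h
      exact hαβ.ne' (by linarith)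
    have hval : ∫ x in b..c, K * x ^ (β - 1 - α)
        = K * ((c ^ (β - α) - b ^ (β - α)) / (β - α)) := by
      rw [intervalIntegral.integral_const_mul,
        integral_rpow (Or.inr ⟨hr_ne, hnot⟩),
        show β - 1 - α + 1 = β - α by ring]
    have hid : (c ^ (β - α) - b ^ (β - α)) / (β - α)
        = (b ^ (β - α) - c ^ (β - α)) / (α - β) := by
      have h1 : β - α ≠ 0 := by linarith
      have h2 : α - β ≠ 0 := hαβ.ne'
      field_simp
      ring
    have hcb : c ^ (β - α) ≤ b ^ (β - α) :=
      Real.rpow_le_rpow_of_nonpos hbpos hbc (by linarith : β - α ≤ 0)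
    have hnonneg : 0 ≤ (b ^ (β - α) - c ^ (β - α)) / (α - β) :=
      div_nonneg (by linarith) hαβ.le
    calc ‖∫ x in b..c, u' x * KPv α s l x‖
        ≤ |∫ x in b..c, K * x ^ (β - 1 - α)| := hle
      _ = K * ((b ^ (β - α) - c ^ (β - α)) / (α - β)) := by
          rw [hval, hid, abs_of_nonneg (mul_nonneg hKpos hnonneg)]
      _ ≤ K * (b ^ (β - α) / (α - β)) := by
          have hc0 : 0 ≤ c ^ (β - α) := Real.rpow_nonneg (by linarith) _
          gcongr
          linarith
  -- final assembly
  have hbp0 : 0 ≤ b ^ (β - α) := Real.rpow_nonneg hbpos.le _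
  rw [heq, hibp]
  have hub : ‖u b‖ ≤ 2 * b ^ (β - α) := hnorm_u b le_rfl
  have huc : ‖u c‖ ≤ 2 * b ^ (β - α) := hnorm_u c hbc
  calc ‖u c * KPv α s l c - u b * KPv α s l b - ∫ x in b..c, u' x * KPv α s l x‖
      ≤ ‖u c * KPv α s l c - u b * KPv α s l b‖
        + ‖∫ x in b..c, u' x * KPv α s l x‖ := norm_sub_le _ _
    _ ≤ (‖u c * KPv α s l c‖ + ‖u b * KPv α s l b‖)
        + ‖∫ x in b..c, u' x * KPv α s l x‖ := by
          have := norm_sub_le (u c * KPv α s l c) (u b * KPv α s l b)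
          linarith
    _ ≤ (2 * b ^ (β - α) + 2 * b ^ (β - α)) + K * (b ^ (β - α) / (α - β)) := by
          have e1 : ‖u c * KPv α s l c‖ = ‖u c‖ := by
            rw [norm_mul, KPnorm_v, mul_one]
          have e2 : ‖u b * KPv α s l b‖ = ‖u b‖ := by
            rw [norm_mul, KPnorm_v, mul_one]
          rw [e1, e2]
          have := hbound_int
          linarith
    _ = (4 + K / (α - β)) * b ^ (β - α) := by ring

/-! Tails in terms of `osc` -/

lemma Hint_pos {α l x : ℝ} (hx : 0 < x) :
    Hint α l x = Complex.exp (-Complex.I * ((Real.pi / 4 : ℝ) : ℂ)) *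
      (((x ^ (2⁻¹ : ℝ) : ℝ) : ℂ) *
        Complex.exp (((1 : ℝ) : ℂ) * Complex.I * ((l * x + x * x ^ α : ℝ) : ℂ))) := by
  unfold Hint
  rw [Real.sign_of_pos hx, abs_of_pos hx]
  push_cast
  ring

lemma Hint_neg {α l x : ℝ} (hx : 0 < x) :
    Hint α l (-x) = Complex.exp (Complex.I * ((Real.pi / 4 : ℝ) : ℂ)) *
      (((x ^ (2⁻¹ : ℝ) : ℝ) : ℂ) *
        Complex.exp (((-1 : ℝ) : ℂ) * Complex.I * ((l * x + x * x ^ α : ℝ) : ℂ))) := by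
  have e1 : -Complex.I * ((Real.sign (-x) : ℝ) : ℂ) * ((Real.pi / 4 : ℝ) : ℂ)
      = Complex.I * ((Real.pi / 4 : ℝ) : ℂ) := by
    rw [Real.sign_of_neg (by linarith : -x < 0)]
    push_cast
    ring
  have e2 : Complex.I * ((l * (-x) + (-x) * |(-x)| ^ α : ℝ) : ℂ)
      = ((-1 : ℝ) : ℂ) * Complex.I * ((l * x + x * x ^ α : ℝ) : ℂ) := by
    rw [abs_neg, abs_of_pos hx]
    push_cast
    ring
  unfold Hint
  rw [e1, e2, abs_neg, abs_of_pos hx]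
  ring

lemma Fint_pos {α l x : ℝ} (hx : 0 < x) :
    Fint α l x = Complex.exp (-Complex.I * ((Real.pi / 4 : ℝ) : ℂ)) *
      (((x ^ (-(2⁻¹) : ℝ) : ℝ) : ℂ) *
        Complex.exp (((1 : ℝ) : ℂ) * Complex.I * ((l * x + x * x ^ α : ℝ) : ℂ))) := by
  unfold Fint
  rw [Real.sign_of_pos hx, abs_of_pos hx]
  push_cast
  ring

lemma Fint_neg {α l x : ℝ} (hx : 0 < x) :
    Fint α l (-x) = -Complex.exp (Complex.I * ((Real.pi / 4 : ℝ) : ℂ)) *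
      (((x ^ (-(2⁻¹) : ℝ) : ℝ) : ℂ) *
        Complex.exp (((-1 : ℝ) : ℂ) * Complex.I * ((l * x + x * x ^ α : ℝ) : ℂ))) := by
  have e1 : -Complex.I * ((Real.sign (-x) : ℝ) : ℂ) * ((Real.pi / 4 : ℝ) : ℂ)
      = Complex.I * ((Real.pi / 4 : ℝ) : ℂ) := by
    rw [Real.sign_of_neg (by linarith : -x < 0)]
    push_cast
    ring
  have e2 : Complex.I * ((l * (-x) + (-x) * |(-x)| ^ α : ℝ) : ℂ)
      = ((-1 : ℝ) : ℂ) * Complex.I * ((l * x + x * x ^ α : ℝ) : ℂ) := by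
    rw [abs_neg, abs_of_pos hx]
    push_cast
    ring
  unfold Fint
  rw [e1, e2, abs_neg, abs_of_pos hx, Real.sign_of_neg (by linarith : -x < 0)]
  push_cast
  ring

lemma Hpartial_tail (α l b c : ℝ) (hb : 1 ≤ b) (hbc : b ≤ c) :
    Hpartial α l c - Hpartial α l b
      = Complex.exp (-Complex.I * ((Real.pi / 4 : ℝ) : ℂ)) * osc α 2⁻¹ 1 l b c
        + Complex.exp (Complex.I * ((Real.pi / 4 : ℝ) : ℂ)) * osc α 2⁻¹ (-1) l b c := by
  have hmem : ∀ x ∈ Set.uIcc b c, 0 < x := by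
    intro x hx
    rw [Set.uIcc_of_le hbc] at hx
    linarith [hx.1]
  have h1 : Hpartial α l c - Hpartial α l b
      = (∫ ξ in b..c, Hint α l ξ) + ∫ x in b..c, Hint α l (-x) := by
    rw [Hpartial_eq, Hpartial_eq, intervalIntegral.integral_comp_neg (fun ξ => Hint α l ξ)]
    have e1 := intervalIntegral.integral_add_adjacent_intervals
      (intervalIntegrable_Hint α l (-c) (-b)) (intervalIntegrable_Hint α l (-b) b)
    have e2 := intervalIntegral.integral_add_adjacent_intervals
      ((intervalIntegrable_Hint α l (-c) (-b)).trans (intervalIntegrable_Hint α l (-b) b))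
      (intervalIntegrable_Hint α l b c)
    linear_combination -e1 - e2
  have h2 : ∫ ξ in b..c, Hint α l ξ
      = Complex.exp (-Complex.I * ((Real.pi / 4 : ℝ) : ℂ)) * osc α 2⁻¹ 1 l b c := by
    unfold osc
    rw [← intervalIntegral.integral_const_mul]
    exact intervalIntegral.integral_congr fun x hx => Hint_pos (hmem x hx)
  have h3 : ∫ x in b..c, Hint α l (-x)
      = Complex.exp (Complex.I * ((Real.pi / 4 : ℝ) : ℂ)) * osc α 2⁻¹ (-1) l b c := by
    unfold osc
    rw [← intervalIntegral.integral_const_mul]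
    refine intervalIntegral.integral_congr fun x hx => ?_
    have := Hint_neg (α := α) (l := l) (hmem x hx)
    simpa using this
  rw [h1, h2, h3]

lemma Fpartial_tail (α l b c : ℝ) (hb : 1 ≤ b) (hbc : b ≤ c) :
    Fpartial α l c - Fpartial α l b
      = Complex.exp (-Complex.I * ((Real.pi / 4 : ℝ) : ℂ)) * osc α (-(2⁻¹)) 1 l b c
        + -Complex.exp (Complex.I * ((Real.pi / 4 : ℝ) : ℂ)) * osc α (-(2⁻¹)) (-1) l b c := by
  have hmem : ∀ x ∈ Set.uIcc b c, 0 < x := by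
    intro x hx
    rw [Set.uIcc_of_le hbc] at hx
    linarith [hx.1]
  have h1 : Fpartial α l c - Fpartial α l b
      = (∫ ξ in b..c, Fint α l ξ) + ∫ x in b..c, Fint α l (-x) := by
    rw [Fpartial_eq, Fpartial_eq, intervalIntegral.integral_comp_neg (fun ξ => Fint α l ξ)]
    have e1 := intervalIntegral.integral_add_adjacent_intervals
      (intervalIntegrable_Fint α l (-c) (-b)) (intervalIntegrable_Fint α l (-b) b)
    have e2 := intervalIntegral.integral_add_adjacent_intervals
      ((intervalIntegrable_Fint α l (-c) (-b)).trans (intervalIntegrable_Fint α l (-b) b))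
      (intervalIntegrable_Fint α l b c)
    linear_combination -e1 - e2
  have h2 : ∫ ξ in b..c, Fint α l ξ
      = Complex.exp (-Complex.I * ((Real.pi / 4 : ℝ) : ℂ)) * osc α (-(2⁻¹)) 1 l b c := by
    unfold osc
    rw [← intervalIntegral.integral_const_mul]
    exact intervalIntegral.integral_congr fun x hx => Fint_pos (hmem x hx)
  have h3 : ∫ x in b..c, Fint α l (-x)
      = -Complex.exp (Complex.I * ((Real.pi / 4 : ℝ) : ℂ)) * osc α (-(2⁻¹)) (-1) l b c := by
    unfold osc
    rw [← intervalIntegral.integral_const_mul]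
    refine intervalIntegral.integral_congr fun x hx => ?_
    have := Fint_neg (α := α) (l := l) (hmem x hx)
    simpa using this
  rw [h1, h2, h3]

/-! Combined tail bound -/

lemma Hexp_norm_one (r : ℝ) : ‖Complex.exp (-Complex.I * ((r : ℝ) : ℂ))‖ = 1 :=
  norm_exp_re_zero (by simp)

lemma Hexp_norm_one' (r : ℝ) : ‖Complex.exp (Complex.I * ((r : ℝ) : ℂ))‖ = 1 :=
  norm_exp_re_zero (by simp)

lemma tail_bound (α : ℝ) (hα : 1 / 2 < α) (M : ℝ) (hM : 0 ≤ M) :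
    ∃ C, 0 < C ∧ ∃ a : ℝ, 1 ≤ a ∧ ∀ l b c : ℝ, |l| ≤ M → a ≤ b → b ≤ c →
      ‖Hpartial α l c - Hpartial α l b‖ ≤ C * b ^ ((2⁻¹ : ℝ) - α) ∧
      ‖Fpartial α l c - Fpartial α l b‖ ≤ C * b ^ ((2⁻¹ : ℝ) - α) := by
  obtain ⟨C1, hC1, a1, ha1, h1⟩ := osc_tail α hα 2⁻¹ (by rw [abs_of_nonneg] <;> norm_num) 1 (Or.inl rfl) M hM
  obtain ⟨C2, hC2, a2, ha2, h2⟩ := osc_tail α hα 2⁻¹ (by rw [abs_of_nonneg] <;> norm_num) (-1) (Or.inr rfl) M hM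
  obtain ⟨C3, hC3, a3, ha3, h3⟩ :=
    osc_tail α hα (-(2⁻¹)) (by rw [abs_neg, abs_of_nonneg] <;> norm_num) 1 (Or.inl rfl) M hM
  obtain ⟨C4, hC4, a4, ha4, h4⟩ :=
    osc_tail α hα (-(2⁻¹)) (by rw [abs_neg, abs_of_nonneg] <;> norm_num) (-1) (Or.inr rfl) M hM
  refine ⟨C1 + C2 + C3 + C4, by positivity, max (max a1 a2) (max a3 a4),
    le_trans ha1 (le_trans (le_max_left _ _) (le_max_left _ _)), ?_⟩
  intro l b c hl hab hbc
  have hab1 : a1 ≤ b := le_trans (le_trans (le_max_left a1 a2) (le_max_left _ _)) hab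
  have hab2 : a2 ≤ b := le_trans (le_trans (le_max_right a1 a2) (le_max_left _ _)) hab
  have hab3 : a3 ≤ b := le_trans (le_trans (le_max_left a3 a4) (le_max_right _ _)) hab
  have hab4 : a4 ≤ b := le_trans (le_trans (le_max_right a3 a4) (le_max_right _ _)) hab
  have hb1 : 1 ≤ b := le_trans ha1 hab1
  have hbp : (0 : ℝ) < b := by linarith
  have hmono : b ^ (-(2⁻¹ : ℝ) - α) ≤ b ^ ((2⁻¹ : ℝ) - α) :=
    Real.rpow_le_rpow_of_exponent_le hb1 (by norm_num)
  have hpos : 0 ≤ b ^ ((2⁻¹ : ℝ) - α) := Real.rpow_nonneg hbp.le _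
  constructor
  · rw [Hpartial_tail α l b c hb1 hbc]
    have b1 := h1 l b c hl hab1 hbc
    have b2 := h2 l b c hl hab2 hbc
    calc ‖Complex.exp (-Complex.I * ((Real.pi / 4 : ℝ) : ℂ)) * osc α 2⁻¹ 1 l b c
          + Complex.exp (Complex.I * ((Real.pi / 4 : ℝ) : ℂ)) * osc α 2⁻¹ (-1) l b c‖
        ≤ ‖Complex.exp (-Complex.I * ((Real.pi / 4 : ℝ) : ℂ)) * osc α 2⁻¹ 1 l b c‖
          + ‖Complex.exp (Complex.I * ((Real.pi / 4 : ℝ) : ℂ)) * osc α 2⁻¹ (-1) l b c‖ :=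
          norm_add_le _ _
      _ = ‖osc α 2⁻¹ 1 l b c‖ + ‖osc α 2⁻¹ (-1) l b c‖ := by
          rw [norm_mul, norm_mul, Hexp_norm_one, Hexp_norm_one', one_mul, one_mul]
      _ ≤ (C1 + C2 + C3 + C4) * b ^ ((2⁻¹ : ℝ) - α) := by
          have e3 : 0 ≤ C3 * b ^ ((2⁻¹ : ℝ) - α) := mul_nonneg hC3.le hpos
          have e4 : 0 ≤ C4 * b ^ ((2⁻¹ : ℝ) - α) := mul_nonneg hC4.le hpos
          nlinarith
  · rw [Fpartial_tail α l b c hb1 hbc]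
    have b3 := h3 l b c hl hab3 hbc
    have b4 := h4 l b c hl hab4 hbc
    have b3' : ‖osc α (-(2⁻¹)) 1 l b c‖ ≤ C3 * b ^ ((2⁻¹ : ℝ) - α) :=
      le_trans b3 (by gcongr C3 * ?_)
    have b4' : ‖osc α (-(2⁻¹)) (-1) l b c‖ ≤ C4 * b ^ ((2⁻¹ : ℝ) - α) :=
      le_trans b4 (by gcongr C4 * ?_)
    calc ‖Complex.exp (-Complex.I * ((Real.pi / 4 : ℝ) : ℂ)) * osc α (-(2⁻¹)) 1 l b c
          + -Complex.exp (Complex.I * ((Real.pi / 4 : ℝ) : ℂ)) * osc α (-(2⁻¹)) (-1) l b c‖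
        ≤ ‖Complex.exp (-Complex.I * ((Real.pi / 4 : ℝ) : ℂ)) * osc α (-(2⁻¹)) 1 l b c‖
          + ‖-Complex.exp (Complex.I * ((Real.pi / 4 : ℝ) : ℂ)) * osc α (-(2⁻¹)) (-1) l b c‖ :=
          norm_add_le _ _
      _ = ‖osc α (-(2⁻¹)) 1 l b c‖ + ‖osc α (-(2⁻¹)) (-1) l b c‖ := by
          rw [norm_mul, norm_mul, norm_neg, Hexp_norm_one, Hexp_norm_one', one_mul, one_mul]
      _ ≤ (C1 + C2 + C3 + C4) * b ^ ((2⁻¹ : ℝ) - α) := by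
          have e1 : 0 ≤ C1 * b ^ ((2⁻¹ : ℝ) - α) := mul_nonneg hC1.le hpos
          have e2 : 0 ≤ C2 * b ^ ((2⁻¹ : ℝ) - α) := mul_nonneg hC2.le hpos
          nlinarith

/-! Convergence of the improper integrals -/

lemma rpow_bound_tendsto (α C : ℝ) (hα : 1 / 2 < α) :
    Tendsto (fun b : ℝ => C * b ^ ((2⁻¹ : ℝ) - α)) atTop (𝓝 0) := by
  have h := (tendsto_rpow_neg_atTop (y := α - 2⁻¹) (by linarith)).const_mul C
  rw [mul_zero] at h
  have e : -(α - 2⁻¹) = (2⁻¹ : ℝ) - α := by ring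
  rwa [e] at h

lemma exists_tendsto_H (α : ℝ) (hα : 1 / 2 < α) (l : ℝ) :
    ∃ x, Tendsto (fun R : ℝ => Hpartial α l R) atTop (𝓝 x) := by
  apply cauchySeq_tendsto_of_complete
  rw [Metric.cauchySeq_iff']
  intro ε hε
  obtain ⟨C, hC, a, ha, hb⟩ := tail_bound α hα |l| (abs_nonneg l)
  obtain ⟨N, hN1, hN2⟩ :=
    (((rpow_bound_tendsto α C hα).eventually (gt_mem_nhds hε)).and
      (eventually_ge_atTop a)).exists
  refine ⟨N, fun n hn => ?_⟩
  rw [dist_eq_norm]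
  calc ‖Hpartial α l n - Hpartial α l N‖ ≤ C * N ^ ((2⁻¹ : ℝ) - α) :=
        (hb l N n le_rfl hN2 hn).1
    _ < ε := hN1

lemma exists_tendsto_F (α : ℝ) (hα : 1 / 2 < α) (l : ℝ) :
    ∃ x, Tendsto (fun R : ℝ => Fpartial α l R) atTop (𝓝 x) := by
  apply cauchySeq_tendsto_of_complete
  rw [Metric.cauchySeq_iff']
  intro ε hε
  obtain ⟨C, hC, a, ha, hb⟩ := tail_bound α hα |l| (abs_nonneg l)
  obtain ⟨N, hN1, hN2⟩ :=
    (((rpow_bound_tendsto α C hα).eventually (gt_mem_nhds hε)).and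
      (eventually_ge_atTop a)).exists
  refine ⟨N, fun n hn => ?_⟩
  rw [dist_eq_norm]
  calc ‖Fpartial α l n - Fpartial α l N‖ ≤ C * N ^ ((2⁻¹ : ℝ) - α) :=
        (hb l N n le_rfl hN2 hn).2
    _ < ε := hN1

lemma uniformCauchy_H (α : ℝ) (hα : 1 / 2 < α) (M : ℝ) (hM : 0 ≤ M) :
    UniformCauchySeqOn (fun R l => Complex.I * Hpartial α l R) atTop
      {l : ℝ | |l| ≤ M} := by
  rw [Metric.uniformCauchySeqOn_iff]
  intro ε hε
  obtain ⟨C, hC, a, ha, hb⟩ := tail_bound α hα M hM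
  obtain ⟨N, hN1, hN2⟩ :=
    (((rpow_bound_tendsto α C hα).eventually (gt_mem_nhds (half_pos hε))).and
      (eventually_ge_atTop a)).exists
  refine ⟨N, fun m hm n hn x hx => ?_⟩
  have key : ∀ k : ℝ, N ≤ k →
      dist (Complex.I * Hpartial α x k) (Complex.I * Hpartial α x N)
        ≤ C * N ^ ((2⁻¹ : ℝ) - α) := by
    intro k hk
    rw [dist_eq_norm, ← mul_sub, norm_mul, Complex.norm_I, one_mul]
    exact (hb x N k hx hN2 hk).1
  calc dist (Complex.I * Hpartial α x m) (Complex.I * Hpartial α x n)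
      ≤ dist (Complex.I * Hpartial α x m) (Complex.I * Hpartial α x N)
        + dist (Complex.I * Hpartial α x N) (Complex.I * Hpartial α x n) :=
        dist_triangle _ _ _
    _ ≤ C * N ^ ((2⁻¹ : ℝ) - α) + C * N ^ ((2⁻¹ : ℝ) - α) := by
        have h1 := key m hm
        have h2 := key n hn
        rw [dist_comm (Complex.I * Hpartial α x N)]
        linarith
    _ < ε := by linarith

/-! Differentiation under the integral sign -/

lemma sign_mul_rpow (t : ℝ) :
    Real.sign t * |t| ^ (-(2⁻¹) : ℝ) * t = |t| ^ ((2⁻¹) : ℝ) := by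
  rcases lt_trichotomy t 0 with h | h | h
  · have hp : 0 < -t := by linarith
    rw [Real.sign_of_neg h, abs_of_neg h]
    have h2 : (-t) ^ (-(2⁻¹) : ℝ) * (-t) = (-t) ^ ((2⁻¹) : ℝ) := by
      calc (-t) ^ (-(2⁻¹) : ℝ) * (-t) = (-t) ^ (-(2⁻¹) : ℝ) * (-t) ^ (1 : ℝ) := by
            rw [Real.rpow_one]
        _ = (-t) ^ ((-(2⁻¹)) + 1 : ℝ) := (Real.rpow_add hp _ _).symm
        _ = (-t) ^ ((2⁻¹) : ℝ) := by norm_num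
    linear_combination h2
  · subst h
    rw [abs_zero, Real.zero_rpow (by norm_num : ((2⁻¹ : ℝ)) ≠ 0)]
    simp
  · have hp : 0 < t := h
    rw [Real.sign_of_pos h, abs_of_pos h]
    have h2 : t ^ (-(2⁻¹) : ℝ) * t = t ^ ((2⁻¹) : ℝ) := by
      calc t ^ (-(2⁻¹) : ℝ) * t = t ^ (-(2⁻¹) : ℝ) * t ^ (1 : ℝ) := by rw [Real.rpow_one]
        _ = t ^ ((-(2⁻¹)) + 1 : ℝ) := (Real.rpow_add hp _ _).symm
        _ = t ^ ((2⁻¹) : ℝ) := by norm_num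
    linear_combination h2

lemma hasDerivAt_Fpartial (α R l : ℝ) :
    HasDerivAt (fun x => Fpartial α x R) (Complex.I * Hpartial α l R) l := by
  have key := intervalIntegral.hasDerivAt_integral_of_dominated_loc_of_deriv_le
      (F := fun x t => Fint α x t) (F' := fun x t => Complex.I * (t : ℂ) * Fint α x t)
      (x₀ := l) (a := -R) (b := R) (μ := volume) (bound := fun t => |t| ^ ((2⁻¹) : ℝ))
      (s := Metric.ball l 1) (Metric.ball_mem_nhds l one_pos)
      (Filter.Eventually.of_forall fun x => (measurable_Fint α x).aestronglyMeasurable)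
      (intervalIntegrable_Fint α l (-R) R)
      (((Complex.measurable_ofReal.const_mul Complex.I).mul
        (measurable_Fint α l)).aestronglyMeasurable)
      ?_ (intervalIntegrable_abs_rpow (by norm_num) (-R) R) ?_
  · have heq : (∫ t in (-R)..R, Complex.I * (t : ℂ) * Fint α l t)
        = Complex.I * Hpartial α l R := by
      rw [Hpartial_eq, ← intervalIntegral.integral_const_mul]
      refine intervalIntegral.integral_congr fun t _ => ?_
      have expand : Complex.I * (t : ℂ) * Fint α l t
          = Complex.I *
            (Complex.exp (-Complex.I * (Real.sign t : ℂ) * ((Real.pi / 4 : ℝ) : ℂ)) *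
              (((Real.sign t * |t| ^ (-(2⁻¹) : ℝ) * t : ℝ)) : ℂ) *
              Complex.exp (Complex.I * ((l * t + t * |t| ^ α : ℝ) : ℂ))) := by
        unfold Fint
        push_cast
        ring
      rw [expand, sign_mul_rpow t]
      unfold Hint
      ring
    have h2 := key.2
    rw [heq] at h2
    exact h2
  · refine Filter.Eventually.of_forall fun t => fun _ x _ => ?_
    rw [norm_mul, norm_mul, Complex.norm_I, one_mul, Complex.norm_real, Real.norm_eq_abs]
    calc |t| * ‖Fint α x t‖ ≤ |t| * |t| ^ (-(2⁻¹) : ℝ) := by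
          have := norm_Fint_le α x t
          have h0 : (0 : ℝ) ≤ |t| := abs_nonneg t
          nlinarith [norm_nonneg (Fint α x t)]
      _ ≤ |t| ^ ((2⁻¹) : ℝ) := by
          rcases eq_or_ne t 0 with rfl | ht
          · simp
          · have hpos : 0 < |t| := abs_pos.mpr ht
            calc |t| * |t| ^ (-(2⁻¹) : ℝ) = |t| ^ (1 + -(2⁻¹) : ℝ) := by
                  rw [Real.rpow_add hpos, Real.rpow_one]
              _ ≤ |t| ^ ((2⁻¹) : ℝ) := by norm_num
  · refine Filter.Eventually.of_forall fun t => fun _ x _ => ?_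
    have base : HasDerivAt (fun y : ℝ => y * t + t * |t| ^ α) t x := by
      simpa using ((hasDerivAt_id x).mul_const t).add_const (t * |t| ^ α)
    have h1 := ((base.ofReal_comp).const_mul Complex.I).cexp
    have h2 := h1.const_mul ((Real.sign t : ℂ) *
      Complex.exp (-Complex.I * (Real.sign t : ℂ) * ((Real.pi / 4 : ℝ) : ℂ)) *
      ((|t| ^ (-(2⁻¹) : ℝ) : ℝ) : ℂ))
    refine h2.congr_deriv ?_
    unfold Fint
    ring

/-- For `α > 1/2`, the function `F` (given at every point by the improper Riemann integral
`Fpartial`) is differentiable on `ℝ` with `F'(λ) = i H(λ)` for every `λ`, where `H` is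
given at every point by the improper Riemann integral `Hpartial`. -/
theorem F_deriv_eq_iH (α : ℝ) (hα : 1 / 2 < α) :
    ∃ F H : ℝ → ℂ,
      (∀ l : ℝ, Tendsto (fun R : ℝ => Fpartial α l R) atTop (nhds (F l))) ∧
      (∀ l : ℝ, Tendsto (fun R : ℝ => Hpartial α l R) atTop (nhds (H l))) ∧
      ∀ l : ℝ, HasDerivAt F (Complex.I * H l) l := by
  choose F hF using exists_tendsto_F α hα
  choose H hH using exists_tendsto_H α hα
  refine ⟨F, H, hF, hH, fun l => ?_⟩
  have hf' : TendstoLocallyUniformlyOn (fun R l => Complex.I * Hpartial α l R)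
      (fun l => Complex.I * H l) atTop Set.univ := by
    rw [tendstoLocallyUniformlyOn_iff_forall_isCompact isOpen_univ]
    intro K _ hK
    obtain ⟨M, hMK⟩ := hK.isBounded.subset_closedBall 0
    have hsub : K ⊆ {x : ℝ | |x| ≤ max M 0} := by
      intro x hx
      have := hMK hx
      rw [Metric.mem_closedBall, Real.dist_eq, sub_zero] at this
      exact le_trans this (le_max_left _ _)
    refine TendstoUniformlyOn.mono ?_ hsub
    apply (uniformCauchy_H α hα (max M 0) (le_max_right _ _)).tendstoUniformlyOn_of_tendsto
    intro x _
    exact (hH x).const_mul Complex.I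
  exact hasDerivAt_of_tendstoLocallyUniformlyOn isOpen_univ hf'
    (Filter.Eventually.of_forall fun R x _ => hasDerivAt_Fpartial α R x)
    (fun x _ => hF x) (Set.mem_univ l)
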